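/- Projection bound for compatible spectral samples: let f : {-1,1}^I → [-1,1], let I be partitioned into sets Θ and H, and let W be the linear span of {χ_S : S ∈ 𝒳} for some collection 𝒳 of subsets of H (so every S ∈ 𝒳 is disjoint from Θ). Writing F_θ : {-1,1}^H → [-1,1] for the restriction F_θ(η) = f(θ,η) and P_W for orthogonal projection onto W, we have ∑_{S∈𝒳} f̂(S)² = ‖P_W f‖₂² ≤ (P_θ[P_W F_θ ≠ 0])², where θ is uniform on {-1,1}^Θ. -/
import Mathlib


open Finset

variable {I : Type*} [Fintype I] [DecidableEq I]

/-- Expectation with respect to the uniform probability measure on `{-1,1}^I ≅ (I → Bool)`. -/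
noncomputable def expec (f : (I → Bool) → ℝ) : ℝ :=
  (∑ ω : I → Bool, f ω) / (Fintype.card (I → Bool) : ℝ)

/-- The value `±1` of a bit. -/
noncomputable def sgn (b : Bool) : ℝ := if b then 1 else -1

/-- The Walsh function `χ_S(ω) = ∏_{i ∈ S} ω_i`. -/
noncomputable def chi (S : Finset I) (ω : I → Bool) : ℝ := ∏ i ∈ S, sgn (ω i)

/-- The Fourier coefficient `f̂(S) = E[f ⬝ χ_S]`. -/
noncomputable def fhat (f : (I → Bool) → ℝ) (S : Finset I) : ℝ :=
  expec (fun ω => f ω * chi S ω)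

section Aux

lemma cardR_pos : (0:ℝ) < (Fintype.card (I → Bool) : ℝ) := by
  exact_mod_cast Fintype.card_pos

lemma expec_nonneg {g : (I → Bool) → ℝ} (h : ∀ ω, 0 ≤ g ω) : 0 ≤ expec g :=
  div_nonneg (Finset.sum_nonneg fun ω _ => h ω) (le_of_lt cardR_pos)

lemma expec_mono {g h : (I → Bool) → ℝ} (hgh : ∀ ω, g ω ≤ h ω) : expec g ≤ expec h :=
  (div_le_div_iff_of_pos_right cardR_pos).mpr (Finset.sum_le_sum fun ω _ => hgh ω)

lemma expec_sum {α : Type*} (s : Finset α) (g : α → (I → Bool) → ℝ) :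
    expec (fun ω => ∑ a ∈ s, g a ω) = ∑ a ∈ s, expec (g a) := by
  unfold expec
  rw [Finset.sum_comm, Finset.sum_div]

lemma expec_const_mul (c : ℝ) (g : (I → Bool) → ℝ) :
    expec (fun ω => c * g ω) = c * expec g := by
  unfold expec
  rw [← Finset.mul_sum, mul_div_assoc]

lemma expec_const (c : ℝ) : expec (fun _ : I → Bool => c) = c := by
  unfold expec
  rw [Finset.sum_const, Finset.card_univ, nsmul_eq_mul]
  field_simp

lemma expec_chi_mul_chi (S T : Finset I) :
    expec (fun ω => chi S ω * chi T ω) = if S = T then 1 else 0 := by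
  classical
  unfold expec chi
  have key : ∀ ω : I → Bool, (∏ i ∈ S, sgn (ω i)) * ∏ i ∈ T, sgn (ω i)
      = ∏ i : I, ((if i ∈ S then sgn (ω i) else 1) * (if i ∈ T then sgn (ω i) else 1)) := by
    intro ω
    rw [Finset.prod_mul_distrib]
    congr 1 <;> rw [Finset.prod_ite_mem, Finset.univ_inter]
  simp only [key]
  have swap : (∑ ω : I → Bool, ∏ i : I,
      ((if i ∈ S then sgn (ω i) else 1) * (if i ∈ T then sgn (ω i) else 1)))
      = ∏ i : I, ∑ b : Bool, ((if i ∈ S then sgn b else 1) * (if i ∈ T then sgn b else 1)) := by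
    rw [← Fintype.piFinset_univ]
    exact Finset.sum_prod_piFinset Finset.univ
      (fun i b => (if i ∈ S then sgn b else 1) * (if i ∈ T then sgn b else 1))
  rw [swap]
  have factor : ∀ i : I, (∑ b : Bool, ((if i ∈ S then sgn b else 1) * (if i ∈ T then sgn b else 1)))
      = if (i ∈ S ↔ i ∈ T) then 2 else 0 := by
    intro i
    by_cases hS : i ∈ S <;> by_cases hT : i ∈ T <;> simp [hS, hT, sgn] <;> norm_num
  simp only [factor]
  by_cases hST : S = T
  · subst hST
    simp only [iff_self, if_true, Finset.prod_const, if_pos rfl]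
    rw [Finset.card_univ]
    have : (Fintype.card (I → Bool) : ℝ) = 2 ^ Fintype.card I := by
      rw [Fintype.card_fun]
      push_cast
      simp
    rw [this]
    exact div_self (by positivity)
  · rw [if_neg hST]
    obtain ⟨i, hi⟩ : ∃ i, ¬(i ∈ S ↔ i ∈ T) := by
      by_contra h
      push_neg at h
      exact hST (Finset.ext fun i => h i)
    rw [Finset.prod_eq_zero (Finset.mem_univ i) (by rw [if_neg hi]), zero_div]

lemma parseval (a : Finset I → ℝ) (fam : Finset (Finset I)) :
    expec (fun ω => (∑ S ∈ fam, a S * chi S ω) ^ 2) = ∑ S ∈ fam, a S ^ 2 := by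
  classical
  have expand : ∀ ω : I → Bool, (∑ S ∈ fam, a S * chi S ω) ^ 2
      = ∑ S ∈ fam, ∑ T ∈ fam, a S * a T * (chi S ω * chi T ω) := by
    intro ω
    rw [sq, Finset.sum_mul_sum]
    apply Finset.sum_congr rfl; intro S _
    apply Finset.sum_congr rfl; intro T _
    ring
  simp only [expand]
  rw [expec_sum]
  rw [Finset.sum_congr rfl (fun S _ => expec_sum fam _)]
  have : ∀ S ∈ fam, ∑ T ∈ fam, expec (fun ω => a S * a T * (chi S ω * chi T ω))
      = a S ^ 2 := by
    intro S hS
    have : ∀ T ∈ fam, expec (fun ω => a S * a T * (chi S ω * chi T ω))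
        = if S = T then a S ^ 2 else 0 := by
      intro T _
      rw [show (fun ω => a S * a T * (chi S ω * chi T ω))
          = fun ω => (a S * a T) * (chi S ω * chi T ω) from rfl,
        expec_const_mul, expec_chi_mul_chi]
      by_cases h : S = T
      · subst h; simp [sq]
      · simp [h]
    rw [Finset.sum_congr rfl this, Finset.sum_ite_eq fam S (fun _ => a S ^ 2), if_pos hS]
  exact Finset.sum_congr rfl this

lemma fhat_proj (g : (I → Bool) → ℝ) (fam : Finset (Finset I)) :
    expec (fun ω => g ω * ∑ S ∈ fam, fhat g S * chi S ω) = ∑ S ∈ fam, fhat g S ^ 2 := by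
  have : ∀ ω : I → Bool, g ω * ∑ S ∈ fam, fhat g S * chi S ω
      = ∑ S ∈ fam, fhat g S * (g ω * chi S ω) := by
    intro ω
    rw [Finset.mul_sum]
    exact Finset.sum_congr rfl fun S _ => by ring
  simp only [this]
  rw [expec_sum]
  exact Finset.sum_congr rfl fun S _ => by
    rw [expec_const_mul]; unfold fhat; ring

lemma expec_add (g h : (I → Bool) → ℝ) :
    expec (fun ω => g ω + h ω) = expec g + expec h := by
  unfold expec
  rw [Finset.sum_add_distrib, add_div]

lemma expec_sub (g h : (I → Bool) → ℝ) :
    expec (fun ω => g ω - h ω) = expec g - expec h := by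
  unfold expec
  rw [Finset.sum_sub_distrib, sub_div]

lemma bessel (g : (I → Bool) → ℝ) (fam : Finset (Finset I)) :
    ∑ S ∈ fam, fhat g S ^ 2 ≤ expec (fun ω => g ω ^ 2) := by
  have h0 : 0 ≤ expec (fun ω => (g ω - ∑ S ∈ fam, fhat g S * chi S ω) ^ 2) :=
    expec_nonneg fun ω => sq_nonneg _
  have key : expec (fun ω => (g ω - ∑ S ∈ fam, fhat g S * chi S ω) ^ 2)
      = expec (fun ω => g ω ^ 2) - ∑ S ∈ fam, fhat g S ^ 2 := by
    have e1 : (fun ω : I → Bool => (g ω - ∑ S ∈ fam, fhat g S * chi S ω) ^ 2)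
        = fun ω => g ω ^ 2 - (2 * (g ω * ∑ S ∈ fam, fhat g S * chi S ω)
            - (∑ S ∈ fam, fhat g S * chi S ω) ^ 2) := by
      funext ω; ring
    rw [e1, expec_sub, expec_sub, expec_const_mul, fhat_proj, parseval]
    ring
  rw [key] at h0
  linarith

lemma expec_combine (Θ : Finset I) (g : (I → Bool) → ℝ) :
    expec (fun θ => expec (fun η => g (fun i => if i ∈ Θ then θ i else η i)))
      = expec g := by
  classical
  have hinv : Function.Involutive (fun p : (I → Bool) × (I → Bool) =>
      ((fun i => if i ∈ Θ then p.1 i else p.2 i, fun i => if i ∈ Θ then p.2 i else p.1 i)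
        : (I → Bool) × (I → Bool))) := by
    intro p
    refine Prod.ext ?_ ?_ <;> funext i <;> by_cases h : i ∈ Θ <;> simp [h]
  have key : (∑ θ : I → Bool, ∑ η : I → Bool, g (fun i => if i ∈ Θ then θ i else η i))
      = (Fintype.card (I → Bool) : ℝ) * ∑ ω : I → Bool, g ω := by
    have h1 : (∑ θ : I → Bool, ∑ η : I → Bool, g (fun i => if i ∈ Θ then θ i else η i))
        = ∑ p : (I → Bool) × (I → Bool), g (fun i => if i ∈ Θ then p.1 i else p.2 i) :=
      (Fintype.sum_prod_type (f := fun p : (I → Bool) × (I → Bool) =>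
        g (fun i => if i ∈ Θ then p.1 i else p.2 i))).symm
    rw [h1]
    have h2 : (∑ p : (I → Bool) × (I → Bool), g (fun i => if i ∈ Θ then p.1 i else p.2 i))
        = ∑ p : (I → Bool) × (I → Bool), g p.1 :=
      Fintype.sum_bijective _ hinv.bijective _ _ (fun p => rfl)
    rw [h2, Fintype.sum_prod_type]
    simp only [Finset.sum_const, Finset.card_univ, nsmul_eq_mul]
    rw [← Finset.mul_sum]
  unfold expec
  rw [← Finset.sum_div, key, mul_div_cancel_left₀ _ (ne_of_gt cardR_pos)]

end Aux

open Classical in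
/-- **Projection bound for compatible spectral samples.** Let `f : {-1,1}^I → [-1,1]`,
let the coordinates be partitioned into `Θ` and `H = Θᶜ`, and let `W` be the span of
`{χ_S : S ∈ 𝒳}` for a family `𝒳` of subsets of `H`. Then
`∑_{S ∈ 𝒳} f̂(S)² = ‖P_W f‖₂²` and this is at most `(P_θ[P_W F_θ ≠ 0])²`, where
`F_θ(η) = f(θ,η)` is the restriction of `f` given the configuration `θ` on `Θ`,
and `P_W g = ∑_{S ∈ 𝒳} ĝ(S) χ_S` is the orthogonal projection onto `W`. -/
theorem projection_bound (f : (I → Bool) → ℝ) (hf : ∀ ω, |f ω| ≤ 1)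
    (Θ : Finset I) (fam : Finset (Finset I))
    (hfam : ∀ S ∈ fam, ∀ i ∈ S, i ∉ Θ) :
    expec (fun ω => (∑ S ∈ fam, fhat f S * chi S ω) ^ 2) = ∑ S ∈ fam, fhat f S ^ 2 ∧
    (∑ S ∈ fam, fhat f S ^ 2)
      ≤ (expec (fun θ =>
          if (fun ω => ∑ S ∈ fam,
                fhat (fun η => f (fun i => if i ∈ Θ then θ i else η i)) S * chi S ω)
              ≠ (fun _ => (0 : ℝ))
          then 1 else 0)) ^ 2 := by
  classical
  refine ⟨parseval (fun S => fhat f S) fam, ?_⟩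
  set A := Real.sqrt (∑ S ∈ fam, fhat f S ^ 2) with hA
  have hAnn : 0 ≤ A := Real.sqrt_nonneg _
  have hA2 : A ^ 2 = ∑ S ∈ fam, fhat f S ^ 2 :=
    Real.sq_sqrt (Finset.sum_nonneg fun S _ => sq_nonneg _)
  have factA : ∀ S ∈ fam, fhat f S
      = expec (fun θ => fhat (fun η => f (fun i => if i ∈ Θ then θ i else η i)) S) := by
    intro S hS
    have hchi : ∀ θ η : I → Bool,
        chi S η = chi S (fun i => if i ∈ Θ then θ i else η i) := by
      intro θ η
      unfold chi
      refine Finset.prod_congr rfl fun i hi => ?_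
      show sgn (η i) = sgn (if i ∈ Θ then θ i else η i)
      rw [if_neg (hfam S hS i hi)]
    have h1 : ∀ θ : I → Bool,
        fhat (fun η => f (fun i => if i ∈ Θ then θ i else η i)) S
        = expec (fun η => (fun ω => f ω * chi S ω) (fun i => if i ∈ Θ then θ i else η i)) := by
      intro θ
      unfold fhat
      exact congrArg expec (funext fun η => by simp only []; rw [hchi θ η])
    simp only [h1]
    rw [expec_combine Θ (fun ω => f ω * chi S ω)]
    rfl
  have step1 : ∑ S ∈ fam, fhat f S ^ 2
      = expec (fun θ => ∑ S ∈ fam,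
          fhat f S * fhat (fun η => f (fun i => if i ∈ Θ then θ i else η i)) S) := by
    rw [expec_sum]
    refine Finset.sum_congr rfl fun S hS => ?_
    rw [sq, expec_const_mul, ← factA S hS]
  have step2 : ∀ θ : I → Bool,
      (∑ S ∈ fam, fhat f S * fhat (fun η => f (fun i => if i ∈ Θ then θ i else η i)) S)
      ≤ A * (if (fun ω => ∑ S ∈ fam,
                fhat (fun η => f (fun i => if i ∈ Θ then θ i else η i)) S * chi S ω)
              ≠ (fun _ => (0 : ℝ)) then 1 else 0) := by
    intro θ
    set b : Finset I → ℝ := fun S => fhat (fun η => f (fun i => if i ∈ Θ then θ i else η i)) S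
      with hb
    by_cases hz : (fun ω => ∑ S ∈ fam, b S * chi S ω) = (fun _ => (0 : ℝ))
    · rw [if_neg (by simpa using hz)]
      have hb2 : ∑ S ∈ fam, b S ^ 2 = 0 := by
        rw [← parseval b fam]
        have : (fun ω => (∑ S ∈ fam, b S * chi S ω) ^ 2) = fun _ : I → Bool => (0 : ℝ) := by
          funext ω
          rw [congrFun hz ω]
          ring
        rw [this, expec_const]
      have hcs := Finset.sum_mul_sq_le_sq_mul_sq fam (fun S => fhat f S) b
      rw [hb2, mul_zero] at hcs
      have : (∑ S ∈ fam, fhat f S * b S) = 0 := by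
        have := sq_nonneg (∑ S ∈ fam, fhat f S * b S)
        nlinarith
      rw [this, mul_zero]
    · rw [if_pos (by simpa using hz), mul_one]
      have hb2 : ∑ S ∈ fam, b S ^ 2 ≤ 1 := by
        refine le_trans (bessel _ fam) ?_
        have h1 : expec (fun η : I → Bool =>
            (f (fun i => if i ∈ Θ then θ i else η i)) ^ 2) ≤ expec (fun _ : I → Bool => (1:ℝ)) := by
          refine expec_mono fun η => ?_
          have h := abs_le.mp (hf (fun i => if i ∈ Θ then θ i else η i))
          nlinarith [h.1, h.2]
        rw [expec_const] at h1
        exact h1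
      have hcs := Finset.sum_mul_sq_le_sq_mul_sq fam (fun S => fhat f S) b
      have hbnn : (0:ℝ) ≤ ∑ S ∈ fam, b S ^ 2 := Finset.sum_nonneg fun S _ => sq_nonneg _
      have hann : (0:ℝ) ≤ ∑ S ∈ fam, fhat f S ^ 2 := Finset.sum_nonneg fun S _ => sq_nonneg _
      have h3 : (∑ S ∈ fam, fhat f S ^ 2) * (∑ S ∈ fam, b S ^ 2)
          ≤ (∑ S ∈ fam, fhat f S ^ 2) * 1 := mul_le_mul_of_nonneg_left hb2 hann
      rw [mul_one] at h3
      have hsq : (∑ S ∈ fam, fhat f S * b S) ^ 2 ≤ ∑ S ∈ fam, fhat f S ^ 2 := le_trans hcs h3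
      rcases le_or_gt (∑ S ∈ fam, fhat f S * b S) 0 with h | h
      · exact le_trans h (Real.sqrt_nonneg _)
      · calc (∑ S ∈ fam, fhat f S * b S)
            = Real.sqrt ((∑ S ∈ fam, fhat f S * b S) ^ 2) := (Real.sqrt_sq h.le).symm
          _ ≤ Real.sqrt (∑ S ∈ fam, fhat f S ^ 2) := Real.sqrt_le_sqrt hsq
  have step3 : ∑ S ∈ fam, fhat f S ^ 2
      ≤ A * expec (fun θ =>
          if (fun ω => ∑ S ∈ fam,
                fhat (fun η => f (fun i => if i ∈ Θ then θ i else η i)) S * chi S ω)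
              ≠ (fun _ => (0 : ℝ)) then 1 else 0) := by
    rw [step1, ← expec_const_mul]
    exact expec_mono step2
  set P := expec (fun θ =>
      if (fun ω => ∑ S ∈ fam,
            fhat (fun η => f (fun i => if i ∈ Θ then θ i else η i)) S * chi S ω)
          ≠ (fun _ => (0 : ℝ)) then 1 else 0) with hPdef
  have hPnn : 0 ≤ P := expec_nonneg fun θ => by positivity
  nlinarith [step3, hA2, sq_nonneg (A - P)]
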